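/- arXiv:2411.11614 — 5 statements merged into one kernel-verified Lean document; each statement's English description precedes it below -/
import Mathlib

section
/- For any probability distribution arising from a classical local hidden variable model, i.e., p(a,b|x,y) = ∑_λ q(λ)·p_A(a|x,λ)·p_B(b|y,λ) with q a probability distribution over a finite set Λ and p_A, p_B conditional distributions, the CHSH success probability (1/4)·∑_{x,y} ∑_{a⊕b=xy} p(a,b|x,y) is at most 3/4. -/
open Finset

lemma zmod2_sum (f : ZMod 2 → ℝ) : ∑ a, f a = f 0 + f 1 := by
  rw [show (Finset.univ : Finset (ZMod 2)) = {0,1} by decide]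
  simp

lemma chsh_expand (g : ZMod 2 → ZMod 2 → ZMod 2 → ZMod 2 → ℝ) :
    (∑ x : ZMod 2, ∑ y : ZMod 2, ∑ a : ZMod 2, ∑ b : ZMod 2,
      (if a + b = x * y then g x y a b else 0)) =
    g 0 0 0 0 + g 0 0 1 1 + g 0 1 0 0 + g 0 1 1 1 + g 1 0 0 0 + g 1 0 1 1
      + g 1 1 0 1 + g 1 1 1 0 := by
  simp only [zmod2_sum]
  norm_num
  simp only [if_pos (show (2:ZMod 2) = 0 by decide),
    if_neg (show ¬(2:ZMod 2) = 1 by decide)]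
  ring

lemma chsh_key (a0 a1 b0 b1 : ℝ)
    (ha0 : 0 ≤ a0) (ha0' : a0 ≤ 1) (ha1 : 0 ≤ a1) (ha1' : a1 ≤ 1)
    (hb0 : 0 ≤ b0) (hb0' : b0 ≤ 1) (hb1 : 0 ≤ b1) (hb1' : b1 ≤ 1) :
    (a0*b0 + (1-a0)*(1-b0)) + (a0*b1 + (1-a0)*(1-b1)) +
    (a1*b0 + (1-a1)*(1-b0)) + (a1*(1-b1) + (1-a1)*b1) ≤ 3 := by
  nlinarith [mul_nonneg ha0 hb0, mul_nonneg ha0 hb1, mul_nonneg ha1 hb0,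
    mul_nonneg ha1 hb1, mul_nonneg (sub_nonneg.2 ha0') (sub_nonneg.2 hb0'),
    mul_nonneg (sub_nonneg.2 ha0') (sub_nonneg.2 hb1'),
    mul_nonneg (sub_nonneg.2 ha1') (sub_nonneg.2 hb0'),
    mul_nonneg (sub_nonneg.2 ha1') (sub_nonneg.2 hb1'),
    mul_nonneg ha0 (sub_nonneg.2 hb0'), mul_nonneg (sub_nonneg.2 ha0') hb0,
    mul_nonneg ha1 (sub_nonneg.2 hb1'), mul_nonneg (sub_nonneg.2 ha1') hb1]

theorem CHSH_local_hidden_variable_bound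
    (Λ : Type) [Fintype Λ]
    (q : Λ → ℝ) (hq : ∀ l, 0 ≤ q l) (hq1 : ∑ l, q l = 1)
    (pA : ZMod 2 → ZMod 2 → Λ → ℝ)
    (hpA : ∀ a x l, 0 ≤ pA a x l) (hpA1 : ∀ x l, ∑ a, pA a x l = 1)
    (pB : ZMod 2 → ZMod 2 → Λ → ℝ)
    (hpB : ∀ b y l, 0 ≤ pB b y l) (hpB1 : ∀ y l, ∑ b, pB b y l = 1) :
    (1 / 4 : ℝ) * ∑ x : ZMod 2, ∑ y : ZMod 2, ∑ a : ZMod 2, ∑ b : ZMod 2,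
      (if a + b = x * y then ∑ l, q l * pA a x l * pB b y l else 0) ≤ 3 / 4 := by
  have hA : ∀ x l, pA 1 x l = 1 - pA 0 x l := by
    intro x l
    have := hpA1 x l
    rw [zmod2_sum] at this
    linarith
  have hB : ∀ y l, pB 1 y l = 1 - pB 0 y l := by
    intro y l
    have := hpB1 y l
    rw [zmod2_sum] at this
    linarith
  have key : ∑ x : ZMod 2, ∑ y : ZMod 2, ∑ a : ZMod 2, ∑ b : ZMod 2,
      (if a + b = x * y then ∑ l, q l * pA a x l * pB b y l else 0) ≤ 3 := by
    rw [chsh_expand (fun x y a b => ∑ l, q l * pA a x l * pB b y l)]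
    rw [← Finset.sum_add_distrib, ← Finset.sum_add_distrib, ← Finset.sum_add_distrib,
      ← Finset.sum_add_distrib, ← Finset.sum_add_distrib, ← Finset.sum_add_distrib,
      ← Finset.sum_add_distrib]
    calc _ ≤ ∑ l, q l * 3 := by
          apply Finset.sum_le_sum
          intro l _
          have h := chsh_key (pA 0 0 l) (pA 0 1 l) (pB 0 0 l) (pB 0 1 l)
            (hpA 0 0 l) ?_ (hpA 0 1 l) ?_ (hpB 0 0 l) ?_ (hpB 0 1 l) ?_
          · rw [hA, hA, hB, hB]
            nlinarith [hq l, h]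
          · nlinarith [hpA 1 0 l, hA 0 l]
          · nlinarith [hpA 1 1 l, hA 1 l]
          · nlinarith [hpB 1 0 l, hB 0 l]
          · nlinarith [hpB 1 1 l, hB 1 l]
      _ = 3 := by rw [← Finset.sum_mul, hq1, one_mul]
  linarith
end

section
/- If p is a distribution Markov with respect to the mediation DAG X → A → B → C with latent Λ → A, Λ → C, i.e., p(x,a,b,c) = ∑_λ p(x)·p(λ)·p(a|x,λ)·p(b|a)·p(c|b,λ), then the Verma constraint holds: the quantity q(c|b) := ∑_a p(a|x)·p(c|x,a,b) is independent of x, for all x with p(x) > 0 and all (a,b) in the support. -/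
open Finset

theorem verma_constraint_mediation
    (X A B C Λ : Type) [Fintype X] [Fintype A] [Fintype B] [Fintype C] [Fintype Λ]
    (pX : X → ℝ) (pΛ : Λ → ℝ)
    (pA : A → X → Λ → ℝ) (pB : B → A → ℝ) (pC : C → B → Λ → ℝ)
    (hpX : ∀ x, 0 ≤ pX x) (hpX1 : ∑ x, pX x = 1)
    (hpΛ : ∀ l, 0 ≤ pΛ l) (hpΛ1 : ∑ l, pΛ l = 1)
    (hpA : ∀ a x l, 0 ≤ pA a x l) (hpA1 : ∀ x l, ∑ a, pA a x l = 1)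
    (hpB : ∀ b a, 0 ≤ pB b a) (hpB1 : ∀ a, ∑ b, pB b a = 1)
    (hpC : ∀ c b l, 0 ≤ pC c b l) (hpC1 : ∀ b l, ∑ c, pC c b l = 1)
    -- the joint distribution, Markov w.r.t. the mediation DAG
    (p : X → A → B → C → ℝ)
    (hp : ∀ x a b c, p x a b c = ∑ l, pX x * pΛ l * pA a x l * pB b a * pC c b l) :
    ∀ (x x' : X) (b : B) (c : C),
      0 < pX x → 0 < pX x' →
      (∀ a, 0 < ∑ c', p x a b c') → (∀ a, 0 < ∑ c', p x' a b c') →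
      -- ∑_a p(a|x)·p(c|x,a,b) is independent of x
      (∑ a, ((∑ b', ∑ c', p x a b' c') / pX x) *
            (p x a b c / ∑ c', p x a b c')) =
      (∑ a, ((∑ b', ∑ c', p x' a b' c') / pX x') *
            (p x' a b c / ∑ c', p x' a b c')) := by
  intro x x' b c hx hx' hS hS'
  have key : ∀ (y : X), 0 < pX y → (∀ a, 0 < ∑ c', p y a b c') →
      (∑ a, ((∑ b', ∑ c', p y a b' c') / pX y) * (p y a b c / ∑ c', p y a b c'))
        = ∑ l, pΛ l * pC c b l := by
    intro y hy hSy
    have h1 : ∀ (a : A) (b'' : B),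
        (∑ c', p y a b'' c') = pX y * pB b'' a * ∑ l, pΛ l * pA a y l := by
      intro a b''
      simp only [hp]
      rw [Finset.sum_comm]
      calc ∑ l, ∑ c', pX y * pΛ l * pA a y l * pB b'' a * pC c' b'' l
          = ∑ l, pX y * pΛ l * pA a y l * pB b'' a := by
            refine Finset.sum_congr rfl fun l _ => ?_
            rw [← Finset.mul_sum, hpC1, mul_one]
        _ = pX y * pB b'' a * ∑ l, pΛ l * pA a y l := by
            rw [Finset.mul_sum]; exact Finset.sum_congr rfl fun l _ => by ring
    have h2 : ∀ a : A, (∑ b', ∑ c', p y a b' c') = pX y * ∑ l, pΛ l * pA a y l := by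
      intro a
      calc ∑ b', ∑ c', p y a b' c'
          = ∑ b', pX y * pB b' a * ∑ l, pΛ l * pA a y l :=
            Finset.sum_congr rfl fun b' _ => h1 a b'
        _ = (∑ b', pB b' a) * (pX y * ∑ l, pΛ l * pA a y l) := by
            rw [Finset.sum_mul]; exact Finset.sum_congr rfl fun b' _ => by ring
        _ = pX y * ∑ l, pΛ l * pA a y l := by rw [hpB1, one_mul]
    have h3 : ∀ a : A,
        p y a b c = pX y * pB b a * ∑ l, pΛ l * pA a y l * pC c b l := by
      intro a
      rw [hp, Finset.mul_sum]
      exact Finset.sum_congr rfl fun l _ => by ring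
    have hterm : ∀ a : A,
        ((∑ b', ∑ c', p y a b' c') / pX y) * (p y a b c / ∑ c', p y a b c')
          = ∑ l, pΛ l * pA a y l * pC c b l := by
      intro a
      have hpos := hSy a
      rw [h1 a b] at hpos
      have hB : pB b a ≠ 0 := by
        intro h0; rw [h0] at hpos; simp at hpos
      have hf : (∑ l, pΛ l * pA a y l) ≠ 0 := by
        intro h0; rw [h0] at hpos; simp at hpos
      rw [h1 a b, h2 a, h3 a]
      field_simp
    calc ∑ a, ((∑ b', ∑ c', p y a b' c') / pX y) * (p y a b c / ∑ c', p y a b c')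
        = ∑ a, ∑ l, pΛ l * pA a y l * pC c b l :=
          Finset.sum_congr rfl fun a _ => hterm a
      _ = ∑ l, ∑ a, pΛ l * pA a y l * pC c b l := Finset.sum_comm
      _ = ∑ l, pΛ l * pC c b l := by
          refine Finset.sum_congr rfl fun l _ => ?_
          calc ∑ a, pΛ l * pA a y l * pC c b l
              = pΛ l * pC c b l * ∑ a, pA a y l := by
                rw [Finset.mul_sum]; exact Finset.sum_congr rfl fun a _ => by ring
            _ = pΛ l * pC c b l := by rw [hpA1, mul_one]
  rw [key x hx hS, key x' hx' hS']
end

section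
/- In the instrumental scenario, any distribution of the form p(a,b|x) = ∑_λ q(λ)·p_A(a|x,λ)·p_B(b|a,λ), with q a probability distribution on a finite set Λ, satisfies the inequality max_a ∑_b max_x p(a,b|x) ≤ 1. -/
open Finset

theorem instrumental_inequality_classical
    (Λ : Type) [Fintype Λ]
    (q : Λ → ℝ) (hq : ∀ l, 0 ≤ q l) (hq1 : ∑ l, q l = 1)
    (pA : ZMod 2 → ZMod 2 → Λ → ℝ)
    (hpA : ∀ a x l, 0 ≤ pA a x l) (hpA1 : ∀ x l, ∑ a, pA a x l = 1)
    (pB : ZMod 2 → ZMod 2 → Λ → ℝ)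
    (hpB : ∀ b a l, 0 ≤ pB b a l) (hpB1 : ∀ a l, ∑ b, pB b a l = 1)
    (p : ZMod 2 → ZMod 2 → ZMod 2 → ℝ)
    (hp : ∀ a b x, p a b x = ∑ l, q l * pA a x l * pB b a l) :
    ∀ a : ZMod 2, ∑ b : ZMod 2, max (p a b 0) (p a b 1) ≤ 1 := by
  intro a
  have hpAle : ∀ x l, pA a x l ≤ 1 := by
    intro x l
    have h := hpA1 x l
    have : ∑ a', pA a' x l = pA a x l + ∑ a' ∈ univ.erase a, pA a' x l := by
      rw [add_comm, Finset.sum_erase_add]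
      exact mem_univ a
    nlinarith [Finset.sum_nonneg (fun a' (_ : a' ∈ univ.erase a) => hpA a' x l)]
  have key : ∀ b, max (p a b 0) (p a b 1) ≤
      ∑ l, q l * max (pA a 0 l) (pA a 1 l) * pB b a l := by
    intro b
    apply max_le <;> rw [hp] <;> apply Finset.sum_le_sum <;> intro l _ <;>
      apply mul_le_mul_of_nonneg_right _ (hpB b a l) <;>
      apply mul_le_mul_of_nonneg_left _ (hq l)
    · exact le_max_left _ _
    · exact le_max_right _ _
  calc ∑ b : ZMod 2, max (p a b 0) (p a b 1)
      ≤ ∑ b : ZMod 2, ∑ l, q l * max (pA a 0 l) (pA a 1 l) * pB b a l :=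
        Finset.sum_le_sum fun b _ => key b
    _ = ∑ l, q l * max (pA a 0 l) (pA a 1 l) * ∑ b : ZMod 2, pB b a l := by
        rw [Finset.sum_comm]; simp [Finset.mul_sum]
    _ = ∑ l, q l * max (pA a 0 l) (pA a 1 l) := by
        simp [hpB1]
    _ ≤ ∑ l, q l := by
        apply Finset.sum_le_sum; intro l _
        have : max (pA a 0 l) (pA a 1 l) ≤ 1 := max_le (hpAle 0 l) (hpAle 1 l)
        nlinarith [hq l]
    _ = 1 := hq1
end

section
/- The projected GYNI distribution p(a,b,c|x) defined by p(0,0,0|0)=p(1,0,1|0)=p(1,1,0|0)=1/3, p(0,1,1|1)=p(1,0,1|1)=p(1,1,0|1)=1/3 and 0 otherwise, cannot be written as a convex combination of the 32 deterministic strategies of the form a = f(x), b = g(a), c = h(b) with f,g,h : {0,1} → {0,1} (where for each deterministic strategy the induced distribution is the point mass at (f(x), g(f(x)), h(g(f(x)))) for each x). -/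
open Finset

set_option maxHeartbeats 2000000

noncomputable def projGYNI (a b c x : ZMod 2) : ℝ :=
  if (x = 0 ∧ ((a, b, c) = ((0 : ZMod 2), (0 : ZMod 2), (0 : ZMod 2)) ∨
               (a, b, c) = (1, 0, 1) ∨ (a, b, c) = (1, 1, 0))) ∨
     (x = 1 ∧ ((a, b, c) = ((0 : ZMod 2), (1 : ZMod 2), (1 : ZMod 2)) ∨
               (a, b, c) = (1, 0, 1) ∨ (a, b, c) = (1, 1, 0)))
  then (1 / 3 : ℝ) else 0

theorem projected_GYNI_not_classical :
    ¬ ∃ w : (ZMod 2 → ZMod 2) × (ZMod 2 → ZMod 2) × (ZMod 2 → ZMod 2) → ℝ,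
      (∀ s, 0 ≤ w s) ∧ (∑ s, w s = 1) ∧
      (∀ a b c x : ZMod 2,
        projGYNI a b c x =
          ∑ s, w s * (if a = s.1 x then 1 else 0) *
                (if b = s.2.1 a then 1 else 0) *
                (if c = s.2.2 b then 1 else 0)) := by
  rintro ⟨w, hw0, hw1, hp⟩
  have e1 := hp 0 0 0 0
  have e2 := hp 1 1 0 0
  have e3 := hp 0 1 1 1
  have e4 := hp 1 0 1 1
  rw [show projGYNI 0 0 0 0 = 1/3 by norm_num [projGYNI]] at e1
  rw [show projGYNI 1 1 0 0 = 1/3 by norm_num [projGYNI]] at e2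
  rw [show projGYNI 0 1 1 1 = 1/3 by norm_num [projGYNI]] at e3
  rw [show projGYNI 1 0 1 1 = 1/3 by norm_num [projGYNI]] at e4
  have key : ∀ s : (ZMod 2 → ZMod 2) × (ZMod 2 → ZMod 2) × (ZMod 2 → ZMod 2),
      (w s * (if (0:ZMod 2) = s.1 0 then (1:ℝ) else 0) * (if (0:ZMod 2) = s.2.1 0 then 1 else 0) * (if (0:ZMod 2) = s.2.2 0 then 1 else 0)
    + w s * (if (1:ZMod 2) = s.1 0 then (1:ℝ) else 0) * (if (1:ZMod 2) = s.2.1 1 then 1 else 0) * (if (0:ZMod 2) = s.2.2 1 then 1 else 0)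
    + w s * (if (0:ZMod 2) = s.1 1 then (1:ℝ) else 0) * (if (1:ZMod 2) = s.2.1 0 then 1 else 0) * (if (1:ZMod 2) = s.2.2 1 then 1 else 0)
    + w s * (if (1:ZMod 2) = s.1 1 then (1:ℝ) else 0) * (if (0:ZMod 2) = s.2.1 1 then 1 else 0) * (if (1:ZMod 2) = s.2.2 0 then 1 else 0))
    ≤ w s := by
    intro s
    have h2 : ∀ x : ZMod 2, x = 0 ∨ x = 1 := by decide
    rcases h2 (s.1 0) with h₁|h₁ <;> rcases h2 (s.1 1) with h₂|h₂ <;>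
      rcases h2 (s.2.1 0) with h₃|h₃ <;> rcases h2 (s.2.1 1) with h₄|h₄ <;>
      rcases h2 (s.2.2 0) with h₅|h₅ <;> rcases h2 (s.2.2 1) with h₆|h₆ <;>
      simp [h₁,h₂,h₃,h₄,h₅,h₆] <;> linarith [hw0 s]
  have hs := Finset.sum_le_sum (s := (Finset.univ : Finset ((ZMod 2 → ZMod 2) × (ZMod 2 → ZMod 2) × (ZMod 2 → ZMod 2)))) (fun s _ => key s)
  rw [Finset.sum_add_distrib, Finset.sum_add_distrib, Finset.sum_add_distrib,
      ← e1, ← e2, ← e3, ← e4, hw1] at hs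
  norm_num at hs
end

section
/- The symmetric perfectly correlated triangle distribution p(a,b,c) = 1/2 if a = b = c and 0 otherwise (a,b,c ∈ {0,1}) cannot be realized in the triangle causal structure with independent classical latent variables: there are no finite sets Λ₁,Λ₂,Λ₃ with independent distributions q₁,q₂,q₃ and response functions p_A(a|λ₂,λ₃), p_B(b|λ₁,λ₃), p_C(c|λ₁,λ₂) such that p(a,b,c) = ∑_{λ₁,λ₂,λ₃} q₁(λ₁)q₂(λ₂)q₃(λ₃)·p_A(a|λ₂,λ₃)·p_B(b|λ₁,λ₃)·p_C(c|λ₁,λ₂). -/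
open Finset

private lemma sum3_zero {Λ₁ Λ₂ Λ₃ : Type} [Fintype Λ₁] [Fintype Λ₂] [Fintype Λ₃]
    (f : Λ₁ → Λ₂ → Λ₃ → ℝ) (hf : ∀ x y z, 0 ≤ f x y z)
    (h : ∑ x, ∑ y, ∑ z, f x y z = 0) : ∀ x y z, f x y z = 0 := by
  intro x y z
  have h1 := (Finset.sum_eq_zero_iff_of_nonneg (fun x _ =>
    Finset.sum_nonneg fun y _ => Finset.sum_nonneg fun z _ => hf x y z)).mp h x (Finset.mem_univ x)
  have h2 := (Finset.sum_eq_zero_iff_of_nonneg (fun y _ =>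
    Finset.sum_nonneg fun z _ => hf x y z)).mp h1 y (Finset.mem_univ y)
  exact (Finset.sum_eq_zero_iff_of_nonneg (fun z _ => hf x y z)).mp h2 z (Finset.mem_univ z)

theorem triangle_perfect_correlation_not_classical
    (Λ₁ Λ₂ Λ₃ : Type) [Fintype Λ₁] [Fintype Λ₂] [Fintype Λ₃]
    (q₁ : Λ₁ → ℝ) (q₂ : Λ₂ → ℝ) (q₃ : Λ₃ → ℝ)
    (hq₁ : ∀ l, 0 ≤ q₁ l) (hq₁1 : ∑ l, q₁ l = 1)
    (hq₂ : ∀ l, 0 ≤ q₂ l) (hq₂1 : ∑ l, q₂ l = 1)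
    (hq₃ : ∀ l, 0 ≤ q₃ l) (hq₃1 : ∑ l, q₃ l = 1)
    (pA : ZMod 2 → Λ₂ → Λ₃ → ℝ)
    (hpA : ∀ a l₂ l₃, 0 ≤ pA a l₂ l₃) (hpA1 : ∀ l₂ l₃, ∑ a, pA a l₂ l₃ = 1)
    (pB : ZMod 2 → Λ₁ → Λ₃ → ℝ)
    (hpB : ∀ b l₁ l₃, 0 ≤ pB b l₁ l₃) (hpB1 : ∀ l₁ l₃, ∑ b, pB b l₁ l₃ = 1)
    (pC : ZMod 2 → Λ₁ → Λ₂ → ℝ)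
    (hpC : ∀ c l₁ l₂, 0 ≤ pC c l₁ l₂) (hpC1 : ∀ l₁ l₂, ∑ c, pC c l₁ l₂ = 1) :
    ¬ (∀ a b c : ZMod 2,
        (if a = b ∧ b = c then (1 / 2 : ℝ) else 0) =
          ∑ l₁, ∑ l₂, ∑ l₃,
            q₁ l₁ * q₂ l₂ * q₃ l₃ * pA a l₂ l₃ * pB b l₁ l₃ * pC c l₁ l₂) := by
  intro h
  -- nonnegativity of each term
  have hnn : ∀ (a b c : ZMod 2) l₁ l₂ l₃,
      0 ≤ q₁ l₁ * q₂ l₂ * q₃ l₃ * pA a l₂ l₃ * pB b l₁ l₃ * pC c l₁ l₂ := by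
    intro a b c l₁ l₂ l₃
    have := hq₁ l₁; have := hq₂ l₂; have := hq₃ l₃
    have := hpA a l₂ l₃; have := hpB b l₁ l₃; have := hpC c l₁ l₂
    positivity
  -- zero terms for non-constant (a,b,c)
  have hZ : ∀ (a b c : ZMod 2), ¬(a = b ∧ b = c) → ∀ l₁ l₂ l₃,
      q₁ l₁ * q₂ l₂ * q₃ l₃ * pA a l₂ l₃ * pB b l₁ l₃ * pC c l₁ l₂ = 0 := by
    intro a b c hne
    have h0 := (h a b c).symm
    rw [if_neg hne] at h0
    exact sum3_zero _ (fun l₁ l₂ l₃ => hnn a b c l₁ l₂ l₃) h0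
  -- binary normalization
  have hsum2 : ∀ (f : ZMod 2 → ℝ), ∑ a, f a = f 0 + f 1 := by
    intro f
    rw [show (Finset.univ : Finset (ZMod 2)) = {0, 1} from rfl]
    simp
  have hA2 : ∀ l₂ l₃, pA 0 l₂ l₃ + pA 1 l₂ l₃ = 1 := by
    intro l₂ l₃; rw [← hsum2 (fun a => pA a l₂ l₃)]; exact hpA1 l₂ l₃
  have hB2 : ∀ l₁ l₃, pB 0 l₁ l₃ + pB 1 l₁ l₃ = 1 := by
    intro l₁ l₃; rw [← hsum2 (fun b => pB b l₁ l₃)]; exact hpB1 l₁ l₃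
  have hC2 : ∀ l₁ l₂, pC 0 l₁ l₂ + pC 1 l₁ l₂ = 1 := by
    intro l₁ l₂; rw [← hsum2 (fun c => pC c l₁ l₂)]; exact hpC1 l₁ l₂
  -- key structural facts on the support
  have key : ∀ l₁ l₂ l₃, 0 < q₁ l₁ → 0 < q₂ l₂ → 0 < q₃ l₃ →
      pA 0 l₂ l₃ = pB 0 l₁ l₃ ∧ pB 0 l₁ l₃ = pC 0 l₁ l₂ ∧
        pA 0 l₂ l₃ * (1 - pA 0 l₂ l₃) = 0 := by
    intro l₁ l₂ l₃ hp1 hp2 hp3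
    have hqpos : (0:ℝ) < q₁ l₁ * q₂ l₂ * q₃ l₃ := by positivity
    have X : ∀ (a b c : ZMod 2), ¬(a = b ∧ b = c) →
        pA a l₂ l₃ * pB b l₁ l₃ * pC c l₁ l₂ = 0 := by
      intro a b c hne
      have h' : (q₁ l₁ * q₂ l₂ * q₃ l₃) * (pA a l₂ l₃ * pB b l₁ l₃ * pC c l₁ l₂) = 0 := by
        linear_combination hZ a b c hne l₁ l₂ l₃
      exact (mul_eq_zero.mp h').resolve_left hqpos.ne'
    have X010 := X 0 1 0 (by decide)
    have X011 := X 0 1 1 (by decide)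
    have X100 := X 1 0 0 (by decide)
    have X101 := X 1 0 1 (by decide)
    have X001 := X 0 0 1 (by decide)
    have X110 := X 1 1 0 (by decide)
    have hA := hA2 l₂ l₃
    have hB := hB2 l₁ l₃
    have hC := hC2 l₁ l₂
    have P1 : pA 0 l₂ l₃ * pB 1 l₁ l₃ = 0 := by
      linear_combination X010 + X011 - pA 0 l₂ l₃ * pB 1 l₁ l₃ * hC
    have P2 : pA 1 l₂ l₃ * pB 0 l₁ l₃ = 0 := by
      linear_combination X100 + X101 - pA 1 l₂ l₃ * pB 0 l₁ l₃ * hC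
    have P3 : pB 0 l₁ l₃ * pC 1 l₁ l₂ = 0 := by
      linear_combination X001 + X101 - pB 0 l₁ l₃ * pC 1 l₁ l₂ * hA
    have P4 : pB 1 l₁ l₃ * pC 0 l₁ l₂ = 0 := by
      linear_combination X010 + X110 - pB 1 l₁ l₃ * pC 0 l₁ l₂ * hA
    have E1 : pA 0 l₂ l₃ = pB 0 l₁ l₃ := by
      linear_combination P1 - P2 - pA 0 l₂ l₃ * hB + pB 0 l₁ l₃ * hA
    have E2 : pB 0 l₁ l₃ = pC 0 l₁ l₂ := by
      linear_combination P3 - P4 - pB 0 l₁ l₃ * hC + pC 0 l₁ l₂ * hB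
    refine ⟨E1, E2, ?_⟩
    linear_combination P1 - pA 0 l₂ l₃ * hB - pA 0 l₂ l₃ * E1
  -- pick points of positive probability
  obtain ⟨l₁₀, hl₁₀⟩ : ∃ l, 0 < q₁ l := by
    by_contra hc; push_neg at hc
    have : ∑ l, q₁ l = 0 := Finset.sum_eq_zero fun l _ => le_antisymm (hc l) (hq₁ l)
    linarith
  obtain ⟨l₂₀, hl₂₀⟩ : ∃ l, 0 < q₂ l := by
    by_contra hc; push_neg at hc
    have : ∑ l, q₂ l = 0 := Finset.sum_eq_zero fun l _ => le_antisymm (hc l) (hq₂ l)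
    linarith
  obtain ⟨l₃₀, hl₃₀⟩ : ∃ l, 0 < q₃ l := by
    by_contra hc; push_neg at hc
    have : ∑ l, q₃ l = 0 := Finset.sum_eq_zero fun l _ => le_antisymm (hc l) (hq₃ l)
    linarith
  set cst := pC 0 l₁₀ l₂₀ with hcst
  have hcid : cst * (1 - cst) = 0 := by
    obtain ⟨e1, e2, e3⟩ := key l₁₀ l₂₀ l₃₀ hl₁₀ hl₂₀ hl₃₀
    rw [hcst, ← e2, ← e1]
    exact e3
  -- every response equals cst on the support
  have ha_cst : ∀ l₂ l₃, 0 < q₂ l₂ → 0 < q₃ l₃ → pA 0 l₂ l₃ = cst := by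
    intro l₂ l₃ hp2 hp3
    obtain ⟨e1, -, -⟩ := key l₁₀ l₂ l₃ hl₁₀ hp2 hp3
    obtain ⟨-, e2, -⟩ := key l₁₀ l₂₀ l₃ hl₁₀ hl₂₀ hp3
    rw [e1, e2]
  -- each term of the (0,0,0) sum equals q₁ q₂ q₃ * cst
  have hterm : ∀ l₁ l₂ l₃,
      q₁ l₁ * q₂ l₂ * q₃ l₃ * pA 0 l₂ l₃ * pB 0 l₁ l₃ * pC 0 l₁ l₂ =
        q₁ l₁ * q₂ l₂ * q₃ l₃ * cst := by
    intro l₁ l₂ l₃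
    rcases eq_or_lt_of_le (hq₁ l₁) with e | p1
    · rw [← e]; ring
    rcases eq_or_lt_of_le (hq₂ l₂) with e | p2
    · rw [← e]; ring
    rcases eq_or_lt_of_le (hq₃ l₃) with e | p3
    · rw [← e]; ring
    obtain ⟨e1, e2, e3⟩ := key l₁ l₂ l₃ p1 p2 p3
    have ha := ha_cst l₂ l₃ p2 p3
    rw [← e2, ← e1, ha]
    linear_combination (-(q₁ l₁ * q₂ l₂ * q₃ l₃ * (cst + 1))) * hcid
  have h000 := h 0 0 0
  rw [if_pos ⟨rfl, rfl⟩] at h000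
  have hsum : ∑ l₁, ∑ l₂, ∑ l₃,
      q₁ l₁ * q₂ l₂ * q₃ l₃ * pA 0 l₂ l₃ * pB 0 l₁ l₃ * pC 0 l₁ l₂ = cst := by
    calc ∑ l₁, ∑ l₂, ∑ l₃,
        q₁ l₁ * q₂ l₂ * q₃ l₃ * pA 0 l₂ l₃ * pB 0 l₁ l₃ * pC 0 l₁ l₂
        = ∑ l₁, ∑ l₂, ∑ l₃, q₁ l₁ * q₂ l₂ * q₃ l₃ * cst := by
          refine Finset.sum_congr rfl fun l₁ _ => Finset.sum_congr rfl fun l₂ _ =>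
            Finset.sum_congr rfl fun l₃ _ => hterm l₁ l₂ l₃
      _ = ∑ l₁, ∑ l₂, q₁ l₁ * q₂ l₂ * cst := by
          refine Finset.sum_congr rfl fun l₁ _ => Finset.sum_congr rfl fun l₂ _ => ?_
          rw [← Finset.sum_mul, ← Finset.mul_sum, hq₃1, mul_one]
      _ = ∑ l₁, q₁ l₁ * cst := by
          refine Finset.sum_congr rfl fun l₁ _ => ?_
          rw [← Finset.sum_mul, ← Finset.mul_sum, hq₂1, mul_one]
      _ = cst := by rw [← Finset.sum_mul, hq₁1, one_mul]
  rw [hsum] at h000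
  nlinarith [hcid]
end
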